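/- Let n ≥ 1 and let φ : ℝ → ℝ satisfy F(φ(t)) e^{φ(t)} = e^{nt}/n + F(0) with φ(t) > 0, where F(s) = ∑_{r=0}^{n-1} (-1)^{n-r-1} ((n-1)!/r!) s^r. Then φ'(t) = n − (n−1)/t + O((log t)/t²) as t → +∞; in particular φ'(t) → n as t → ∞. -/

import Mathlib

open Real Finset Filter Asymptotics


noncomputable def fc (n r : ℕ) : ℝ := (-1 : ℝ) ^ (n - r - 1) * ((Nat.factorial (n - 1) : ℝ) / (Nat.factorial r : ℝ))

lemma fc_top (m : ℕ) : fc (m+1) m = 1 := by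
  simp [fc, Nat.factorial_ne_zero, div_self]

lemma fc_step (m i : ℕ) (hi : i < m) : fc (m+1) (i+1) * (i+1) = - fc (m+1) i := by
  unfold fc
  have h1 : m + 1 - (i+1) - 1 = m - i - 1 := by omega
  have h2 : m + 1 - i - 1 = (m - i - 1) + 1 := by omega
  rw [h1, h2, pow_succ]
  have : ((i+1).factorial : ℝ) = (i+1) * i.factorial := by
    rw [Nat.factorial_succ]; push_cast; ring
  rw [this]
  have hi0 : ((i:ℝ)+1) ≠ 0 := by positivity
  have hf : (i.factorial : ℝ) ≠ 0 := Nat.cast_ne_zero.2 i.factorial_ne_zero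
  field_simp

lemma sum_deriv (n : ℕ) (hn : 1 ≤ n) (x : ℝ) :
    ∑ r ∈ range n, fc n r * ((r : ℝ) * x ^ (r-1) * Real.exp x + x ^ r * Real.exp x)
      = x ^ (n-1) * Real.exp x := by
  obtain ⟨m, rfl⟩ := Nat.exists_eq_add_of_le hn
  rw [Nat.add_comm 1 m]
  rw [Finset.sum_range_succ']
  have key : ∀ i ∈ range m, fc (m+1) (i+1) * (((i:ℝ)+1) * x ^ i * Real.exp x + x ^ (i+1) * Real.exp x)
      = (fun j => fc (m+1) j * x ^ j * Real.exp x) (i+1) - (fun j => fc (m+1) j * x ^ j * Real.exp x) i := by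
    intro i hi
    simp only
    have := fc_step m i (Finset.mem_range.1 hi)
    have expand : fc (m+1) (i+1) * (((i:ℝ)+1) * x ^ i * Real.exp x + x ^ (i+1) * Real.exp x)
        = (fc (m+1) (i+1) * ((i:ℝ)+1)) * x ^ i * Real.exp x + fc (m+1) (i+1) * x ^ (i+1) * Real.exp x := by ring
    rw [expand, this]; ring
  have step1 : ∑ i ∈ range m, fc (m+1) (i+1) * (((i:ℝ)+1) * x ^ i * Real.exp x + x ^ (i+1) * Real.exp x)
      = (fun j => fc (m+1) j * x ^ j * Real.exp x) m - (fun j => fc (m+1) j * x ^ j * Real.exp x) 0 := by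
    rw [← Finset.sum_range_sub (fun j => fc (m+1) j * x ^ j * Real.exp x) m]
    exact Finset.sum_congr rfl key
  push_cast
  rw [step1]
  simp only [fc_top]
  ring

lemma hasDerivAt_G (n : ℕ) (hn : 1 ≤ n) (x : ℝ) :
    HasDerivAt (fun y => (∑ r ∈ range n, fc n r * y ^ r) * Real.exp y)
      (x ^ (n-1) * Real.exp x) x := by
  have h1 : (fun y => (∑ r ∈ range n, fc n r * y ^ r) * Real.exp y)
      = fun y => ∑ r ∈ range n, fc n r * (y ^ r * Real.exp y) := by
    funext y; rw [Finset.sum_mul]; apply Finset.sum_congr rfl; intros; ring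
  rw [h1, ← sum_deriv n hn x]
  apply HasDerivAt.fun_sum
  intro r _
  have : HasDerivAt (fun y : ℝ => y ^ r * Real.exp y)
      ((r : ℝ) * x ^ (r-1) * Real.exp x + x ^ r * Real.exp x) x :=
    (hasDerivAt_pow r x).mul (Real.hasDerivAt_exp x)
  have h2 := this.const_mul (fc n r)
  convert h2 using 1

lemma phi_deriv_eq (n : ℕ) (hn : 1 ≤ n) (F : ℝ → ℝ)
    (hF : ∀ x : ℝ, F x = ∑ r ∈ Finset.range n,
      (-1 : ℝ) ^ (n - r - 1) * ((Nat.factorial (n - 1) : ℝ) / (Nat.factorial r : ℝ)) * x ^ r)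
    (φ : ℝ → ℝ) (hφdiff : Differentiable ℝ φ)
    (hφeq : ∀ t, F (φ t) * Real.exp (φ t) = Real.exp (n * t) / n + F 0) (t : ℝ) :
    φ t ^ (n-1) * Real.exp (φ t) * deriv φ t = Real.exp (n * t) := by
  have hG : ∀ y, F y * Real.exp y = (∑ r ∈ range n, fc n r * y ^ r) * Real.exp y := by
    intro y
    rw [hF y]; simp only [fc]
  have hchain : HasDerivAt (fun s => F (φ s) * Real.exp (φ s))
      (φ t ^ (n-1) * Real.exp (φ t) * deriv φ t) t := by
    have : (fun s => F (φ s) * Real.exp (φ s))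
        = (fun y => (∑ r ∈ range n, fc n r * y ^ r) * Real.exp y) ∘ φ := by
      funext s; exact hG (φ s)
    rw [this]
    exact (hasDerivAt_G n hn (φ t)).comp t (hφdiff t).hasDerivAt
  have hrhs : HasDerivAt (fun s => Real.exp (n * s) / n + F 0) (Real.exp (n * t)) t := by
    have h1 : HasDerivAt (fun s : ℝ => (n : ℝ) * s) (n : ℝ) t := by
      simpa using (hasDerivAt_id t).const_mul (n : ℝ)
    have h2 := (h1.exp.div_const (n : ℝ)).add_const (F 0)
    have hn0 : (n : ℝ) ≠ 0 := Nat.cast_ne_zero.2 (by omega)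
    rw [mul_div_assoc, div_self hn0, mul_one] at h2
    exact h2
  have : (fun s => F (φ s) * Real.exp (φ s)) = (fun s => Real.exp (n * s) / n + F 0) :=
    funext hφeq
  rw [this] at hchain
  exact hchain.unique hrhs

noncomputable def SS (n : ℕ) (x : ℝ) : ℝ := ∑ r ∈ range n, fc n r * x ^ r

noncomputable def AA (n : ℕ) : ℝ := ∑ r ∈ range n, ((Nat.factorial (n - 1) : ℝ) / (Nat.factorial r : ℝ))

lemma AA_nonneg (n : ℕ) : 0 ≤ AA n := by
  apply Finset.sum_nonneg; intro r _; positivity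

lemma abs_fc (n r : ℕ) : |fc n r| = (Nat.factorial (n - 1) : ℝ) / (Nat.factorial r : ℝ) := by
  rw [fc, abs_mul, abs_pow, abs_neg, abs_one, one_pow, one_mul, abs_div,
    abs_of_nonneg (by positivity : (0:ℝ) ≤ (Nat.factorial (n-1) : ℝ)),
    abs_of_nonneg (by positivity : (0:ℝ) ≤ (Nat.factorial r : ℝ))]

lemma abs_sum_pow_le (n k : ℕ) (hk : k ≤ n) (x : ℝ) (hx : 1 ≤ x) (j : ℕ)
    (hj : ∀ r < k, r + j ≤ n - 1) :
    |∑ r ∈ range k, fc n r * x ^ r| * x ^ j ≤ AA n * x ^ (n - 1) := by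
  have hx0 : (0:ℝ) ≤ x := le_trans zero_le_one hx
  have h1 : |∑ r ∈ range k, fc n r * x ^ r| ≤ ∑ r ∈ range k, |fc n r| * x ^ r := by
    refine le_trans (Finset.abs_sum_le_sum_abs _ _) (Finset.sum_le_sum ?_)
    intro r _
    rw [abs_mul, abs_pow, abs_of_nonneg hx0]
  calc |∑ r ∈ range k, fc n r * x ^ r| * x ^ j
      ≤ (∑ r ∈ range k, |fc n r| * x ^ r) * x ^ j := by
        exact mul_le_mul_of_nonneg_right h1 (by positivity)
    _ = ∑ r ∈ range k, |fc n r| * x ^ (r + j) := by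
        rw [Finset.sum_mul]; apply Finset.sum_congr rfl; intro r _; rw [pow_add]; ring
    _ ≤ ∑ r ∈ range k, ((Nat.factorial (n - 1) : ℝ) / (Nat.factorial r : ℝ)) * x ^ (n - 1) := by
        apply Finset.sum_le_sum
        intro r hr
        rw [abs_fc]
        exact mul_le_mul_of_nonneg_left
          (pow_le_pow_right₀ hx (hj r (Finset.mem_range.1 hr))) (by positivity)
    _ ≤ ∑ r ∈ range n, ((Nat.factorial (n - 1) : ℝ) / (Nat.factorial r : ℝ)) * x ^ (n - 1) := by
        apply Finset.sum_le_sum_of_subset_of_nonneg (Finset.range_subset_range.2 hk)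
        intro r _ _; positivity
    _ = AA n * x ^ (n - 1) := by rw [AA, Finset.sum_mul]

lemma SS_decomp1 (m : ℕ) (x : ℝ) :
    SS (m+1) x - x ^ m = ∑ r ∈ range m, fc (m+1) r * x ^ r := by
  rw [SS, Finset.sum_range_succ]
  have : fc (m+1) m = 1 := by simp [fc, Nat.factorial_ne_zero, div_self]
  rw [this]; ring

lemma SS_decomp2 (n : ℕ) (hn : 1 ≤ n) (x : ℝ) :
    SS n x - x ^ (n-1) + ((n:ℝ) - 1) * x ^ (n-2) = ∑ r ∈ range (n-2), fc n r * x ^ r := by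
  match n, hn with
  | 1, _ => simp [SS, fc]
  | 2, _ =>
    have h : SS 2 x = -1 + x := by
      simp [SS, Finset.sum_range_succ, fc]
    rw [h]; norm_num
  | (m+3), _ =>
    have h1 : SS (m+3) x - x ^ (m+2) = ∑ r ∈ range (m+2), fc (m+3) r * x ^ r := SS_decomp1 (m+2) x
    have h2 : ∑ r ∈ range (m+2), fc (m+3) r * x ^ r
        = ∑ r ∈ range (m+1), fc (m+3) r * x ^ r + fc (m+3) (m+1) * x ^ (m+1) :=
      Finset.sum_range_succ _ _
    have h3 : fc (m+3) (m+1) = -((m:ℝ) + 2) := by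
      have e1 : m + 3 - (m+1) - 1 = 1 := by omega
      have e2 : m + 3 - 1 = m + 2 := rfl
      rw [fc, e1, e2, pow_one]
      have : ((m+2).factorial : ℝ) = ((m:ℝ)+2) * (m+1).factorial := by
        rw [Nat.factorial_succ]; push_cast; ring
      rw [this]
      have : ((m+1).factorial : ℝ) ≠ 0 := Nat.cast_ne_zero.2 (Nat.factorial_ne_zero _)
      field_simp
    have e3 : m + 3 - 1 = m + 2 := rfl
    have e4 : m + 3 - 2 = m + 1 := rfl
    rw [e3, e4, h1, h2, h3]
    push_cast
    ring

lemma phi_tendsto (n : ℕ) (hn : 1 ≤ n) (F : ℝ → ℝ) (hFcont : Continuous F)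
    (φ : ℝ → ℝ) (hφpos : ∀ t, 0 < φ t)
    (hφeq : ∀ t, F (φ t) * Real.exp (φ t) = Real.exp (n * t) / n + F 0) :
    Tendsto φ atTop atTop := by
  rw [tendsto_atTop]
  intro b
  rcases le_or_gt b 0 with hb | hb
  · exact Eventually.of_forall (fun t => le_trans hb (hφpos t).le)
  · -- G bounded on [0, b]
    have hG : Continuous (fun y => F y * Real.exp y) := hFcont.mul Real.continuous_exp
    obtain ⟨K, hK⟩ := (isCompact_Icc (a := (0:ℝ)) (b := b)).bddAbove_image hG.continuousOn
    have hexp : Tendsto (fun t => Real.exp (n * t) / n + F 0) atTop atTop := by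
      apply Filter.tendsto_atTop_add_const_right
      apply Tendsto.atTop_div_const (by positivity : (0:ℝ) < n)
      apply Real.tendsto_exp_atTop.comp
      exact Tendsto.const_mul_atTop (by positivity : (0:ℝ) < (n:ℝ)) tendsto_id
    have hev : ∀ᶠ t in atTop, K < Real.exp (n * t) / n + F 0 :=
      hexp.eventually_gt_atTop K
    filter_upwards [hev] with t ht
    by_contra hcon
    push_neg at hcon
    have hmem : φ t ∈ Set.Icc (0:ℝ) b := ⟨(hφpos t).le, hcon.le⟩
    have : F (φ t) * Real.exp (φ t) ≤ K := hK (Set.mem_image_of_mem _ hmem)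
    rw [hφeq t] at this
    exact absurd this (not_le.2 ht)

set_option maxHeartbeats 2000000 in

lemma phi_bounds (n : ℕ) (hn : 1 ≤ n) (F : ℝ → ℝ) (x0 : ℝ) (hx0 : 1 ≤ x0)
    (hFlow : ∀ x, x0 ≤ x → (1/2) * x^(n-1) ≤ F x)
    (hFhigh : ∀ x, x0 ≤ x → F x ≤ 2 * x^(n-1))
    (φ : ℝ → ℝ) (hφpos : ∀ t, 0 < φ t)
    (hφeq : ∀ t, F (φ t) * Real.exp (φ t) = Real.exp (n * t) / n + F 0)
    (htends : Tendsto φ atTop atTop) :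
    ∃ C : ℝ, 0 ≤ C ∧ ∀ᶠ t in atTop,
      1 ≤ φ t ∧ φ t ≤ n*t + 3 ∧ n*t - φ t ≤ C * Real.log t ∧ t/2 ≤ φ t ∧ 1 ≤ Real.log t := by
  have hn0 : (0:ℝ) < n := by positivity
  set C : ℝ := Real.log (4*n) + 2*(n-1) with hC
  have hC0 : 0 ≤ C := by
    apply add_nonneg
    · apply Real.log_nonneg
      have h1n : (1:ℝ) ≤ n := by exact_mod_cast hn
      nlinarith
    · have h1n : (1:ℝ) ≤ n := by exact_mod_cast hn
      nlinarith
  clear_value C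
  refine ⟨C, hC0, ?_⟩
  have ev1 : ∀ᶠ t in atTop, x0 ≤ φ t := htends.eventually_ge_atTop x0
  have hexp : Tendsto (fun t => Real.exp (n * t)) atTop atTop :=
    Real.tendsto_exp_atTop.comp (Tendsto.const_mul_atTop hn0 tendsto_id)
  have ev2 : ∀ᶠ t in atTop, |F 0| * (2*n) ≤ Real.exp (n * t) :=
    hexp.eventually_ge_atTop _
  have ev3 : ∀ᶠ t in atTop, max 3 ((n:ℝ)+1) ≤ t := eventually_ge_atTop _
  have ev4 : ∀ᶠ t in atTop, C * Real.log t ≤ t/2 := by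
    have h := Real.isLittleO_log_id_atTop.bound (c := 1/(2*(C+1))) (by positivity)
    filter_upwards [h, eventually_ge_atTop (3:ℝ)] with t ht ht3
    have hlt : 0 ≤ Real.log t := Real.log_nonneg (by linarith)
    have ht' : Real.log t ≤ 1/(2*(C+1)) * t := by
      simpa [Real.norm_eq_abs, abs_of_nonneg (show (0:ℝ) ≤ t by linarith), abs_of_nonneg hlt] using ht
    have h1 : C * Real.log t ≤ C * (1/(2*(C+1)) * t) :=
      mul_le_mul_of_nonneg_left ht' hC0
    have h2 : C * (1/(2*(C+1)) * t) ≤ t/2 := by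
      have hpos : (0:ℝ) < 2*(C+1) := by linarith
      have heq : C * (1/(2*(C+1)) * t) = (C*t)/(2*(C+1)) := by ring
      rw [heq, div_le_div_iff₀ hpos (by norm_num : (0:ℝ) < 2)]
      nlinarith
    linarith
  filter_upwards [ev1, ev2, ev3, ev4] with t h1 h2 h3 h4
  have ht3 : (3:ℝ) ≤ t := le_trans (le_max_left _ _) h3
  have htn1 : (n:ℝ)+1 ≤ t := le_trans (le_max_right _ _) h3
  have ht0 : (0:ℝ) < t := by linarith
  have hlog1 : 1 ≤ Real.log t := by
    rw [← Real.log_exp 1]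
    exact Real.log_le_log (Real.exp_pos 1) (le_trans (le_of_lt (by
      have := Real.exp_one_lt_d9; linarith)) ht3)
  have hφ1 : 1 ≤ φ t := le_trans hx0 h1
  have hφ0 : 0 < φ t := hφpos t
  have hpow1 : 1 ≤ φ t ^ (n-1) := by
    calc (1:ℝ) = 1 ^ (n-1) := (one_pow _).symm
    _ ≤ φ t ^ (n-1) := pow_le_pow_left₀ (by norm_num) hφ1 _
  -- upper bound
  have hkey := hφeq t
  have hup : φ t ≤ n*t + 3 := by
    have e1 : Real.exp (φ t) / 2 ≤ F (φ t) * Real.exp (φ t) := by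
      have := hFlow (φ t) h1
      have hE : 0 < Real.exp (φ t) := Real.exp_pos _
      nlinarith
    have e2 : F (φ t) * Real.exp (φ t) ≤ 2 * Real.exp (n*t) := by
      rw [hkey]
      have : F 0 ≤ |F 0| := le_abs_self _
      have h2' : |F 0| ≤ Real.exp (n*t) / (2*n) := by
        rw [le_div_iff₀ (by positivity)]; linarith [h2]
      have : Real.exp (n*t)/n + F 0 ≤ Real.exp (n*t)/n + Real.exp (n*t)/(2*n) := by linarith
      have hnn : (1:ℝ) ≤ n := Nat.one_le_cast.2 hn
      have : Real.exp (n*t)/n ≤ Real.exp (n*t) := by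
        rw [div_le_iff₀ hn0]
        nlinarith [Real.exp_pos ((n:ℝ)*t)]
      have : Real.exp (n*t)/(2*n) ≤ Real.exp (n*t) := by
        rw [div_le_iff₀ (by positivity)]
        nlinarith [Real.exp_pos ((n:ℝ)*t)]
      linarith
    have e3 : Real.exp (φ t) ≤ 4 * Real.exp (n*t) := by linarith
    have e4 : Real.exp (φ t) ≤ Real.exp (n*t + Real.log 4) := by
      rw [Real.exp_add, Real.exp_log (by norm_num : (0:ℝ) < 4)]
      linarith
    have := Real.exp_le_exp.1 e4
    have hlog4 : Real.log 4 ≤ 3 := by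
      have := Real.log_le_sub_one_of_pos (by norm_num : (0:ℝ) < 4)
      linarith
    linarith
  -- lower bound
  have hlow : n*t - φ t ≤ C * Real.log t := by
    have hb : (0:ℝ) < (n:ℝ)*t + 3 := by positivity
    have e1 : Real.exp (n*t) / (2*n) ≤ F (φ t) * Real.exp (φ t) := by
      rw [hkey]
      have habs : |F 0| ≤ Real.exp (n*t) / (2*n) := by
        rw [le_div_iff₀ (by positivity)]; linarith [h2]
      have : -F 0 ≤ |F 0| := neg_le_abs _
      have hsplit : Real.exp (n*t)/n = Real.exp (n*t)/(2*n) + Real.exp (n*t)/(2*n) := by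
        field_simp; ring
      linarith
    have e2 : F (φ t) * Real.exp (φ t) ≤ 2 * ((n:ℝ)*t+3)^(n-1) * Real.exp (φ t) := by
      have hF2 := hFhigh (φ t) h1
      have hE : 0 < Real.exp (φ t) := Real.exp_pos _
      have hpowle : φ t ^ (n-1) ≤ ((n:ℝ)*t+3)^(n-1) :=
        pow_le_pow_left₀ hφ0.le hup _
      nlinarith
    have e3 : Real.exp (n*t) ≤ 4*n * ((n:ℝ)*t+3)^(n-1) * Real.exp (φ t) := by
      have h6 := le_trans e1 e2
      rw [div_le_iff₀ (by positivity : (0:ℝ) < 2*n)] at h6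
      exact h6.trans_eq (by ring)
    -- take logs
    have hrhspos : 0 < 4*(n:ℝ) * ((n:ℝ)*t+3)^(n-1) * Real.exp (φ t) := by positivity
    have hcast : ((n-1 : ℕ):ℝ) = (n:ℝ) - 1 := by
      have := Nat.cast_sub hn (R := ℝ); simpa using this
    have e4 : (n:ℝ)*t ≤ Real.log (4*(n:ℝ)) + ((n:ℝ)-1) * Real.log ((n:ℝ)*t+3) + φ t := by
      have h5 := Real.log_le_log (Real.exp_pos _) e3
      rw [Real.log_exp] at h5
      rw [Real.log_mul (by positivity) (Real.exp_ne_zero _), Real.log_mul (by positivity) (by positivity),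
        Real.log_pow, Real.log_exp, hcast] at h5
      linarith
    have e5 : Real.log ((n:ℝ)*t+3) ≤ 2 * Real.log t := by
      have hle : (n:ℝ)*t + 3 ≤ t^2 := by nlinarith
      calc Real.log ((n:ℝ)*t+3) ≤ Real.log (t^2) := Real.log_le_log hb hle
        _ = 2 * Real.log t := by rw [Real.log_pow]; push_cast; ring
    have e6 : ((n:ℝ)-1) * Real.log ((n:ℝ)*t+3) ≤ 2*((n:ℝ)-1) * Real.log t := by
      have hn1 : (0:ℝ) ≤ (n:ℝ)-1 := by
        have : (1:ℝ) ≤ n := Nat.one_le_cast.2 hn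
        linarith
      nlinarith
    have e7 : Real.log (4*(n:ℝ)) ≤ Real.log (4*(n:ℝ)) * Real.log t := by
      have hl : 0 ≤ Real.log (4*(n:ℝ)) := by
        apply Real.log_nonneg
        have : (1:ℝ) ≤ n := Nat.one_le_cast.2 hn
        linarith
      nlinarith
    have hCexp : C * Real.log t = Real.log (4*(n:ℝ)) * Real.log t + 2*((n:ℝ)-1) * Real.log t := by
      rw [hC]; ring
    rw [hCexp]
    linarith
  refine ⟨hφ1, hup, hlow, ?_, hlog1⟩
  have hnt : t ≤ (n:ℝ)*t := by
    have h1n : (1:ℝ) ≤ n := by exact_mod_cast hn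
    nlinarith
  linarith

lemma F_approx1 (n : ℕ) (hn : 1 ≤ n) (x : ℝ) (hx : 1 ≤ x) :
    |SS n x - x ^ (n-1)| * x ≤ AA n * x ^ (n-1) := by
  obtain ⟨m, rfl⟩ := Nat.exists_eq_add_of_le hn
  rw [Nat.add_comm 1 m]
  have e : m + 1 - 1 = m := rfl
  rw [e, SS_decomp1 m x]
  have := abs_sum_pow_le (m+1) m (by omega) x hx 1 (by intro r hr; omega)
  rw [pow_one] at this
  exact this

lemma F_approx2 (n : ℕ) (hn : 1 ≤ n) (x : ℝ) (hx : 1 ≤ x) :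
    |SS n x - x ^ (n-1) + ((n:ℝ) - 1) * x ^ (n-2)| * x ^ 2 ≤ AA n * x ^ (n-1) := by
  rw [SS_decomp2 n hn x]
  exact abs_sum_pow_le n (n-2) (by omega) x hx 2 (by intro r hr; omega)

set_option maxHeartbeats 2000000 in
/-- As `t → +∞`, `φ'(t) = n − (n−1)/t + O((log t)/t²)`; in particular `φ'(t) → n`. -/
theorem stmt_13 (n : ℕ) (hn : 1 ≤ n)
    (F : ℝ → ℝ)
    (hF : ∀ x : ℝ, F x = ∑ r ∈ Finset.range n,
      (-1 : ℝ) ^ (n - r - 1) * ((Nat.factorial (n - 1) : ℝ) / (Nat.factorial r : ℝ)) * x ^ r)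
    (φ : ℝ → ℝ) (hφdiff : Differentiable ℝ φ) (hφpos : ∀ t, 0 < φ t)
    (hφeq : ∀ t, F (φ t) * Real.exp (φ t) = Real.exp (n * t) / n + F 0) :
    (fun t => deriv φ t - ((n : ℝ) - ((n : ℝ) - 1) / t))
      =O[atTop] (fun t => Real.log t / t ^ 2) ∧
    Filter.Tendsto (deriv φ) atTop (nhds (n : ℝ)) := by
  have hn0 : (0:ℝ) < n := by positivity
  have hFS : ∀ x, F x = SS n x := by
    intro x; rw [hF x, SS]; simp only [fc]
  have hFcont : Continuous F := by
    have : F = fun x => ∑ r ∈ Finset.range n,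
        (-1 : ℝ) ^ (n - r - 1) * ((Nat.factorial (n - 1) : ℝ) / (Nat.factorial r : ℝ)) * x ^ r :=
      funext hF
    rw [this]
    exact continuous_finset_sum _ (fun r _ => continuous_const.mul (continuous_pow r))
  -- F bounds
  set x0 : ℝ := max 1 (4 * AA n) with hx0def
  have hx01 : 1 ≤ x0 := le_max_left _ _
  have hFbound : ∀ x, x0 ≤ x → |F x - x ^ (n-1)| ≤ x ^ (n-1) / 2 := by
    intro x hx
    have hx1 : 1 ≤ x := le_trans hx01 hx
    have hx0' : (0:ℝ) < x := by linarith
    have h1 := F_approx1 n hn x hx1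
    rw [← hFS] at h1
    have h2 : AA n * x ^ (n-1) ≤ (x/2) * x ^ (n-1) / 2 * 2 := by
      have hAx : AA n ≤ x / 4 := by
        have : 4 * AA n ≤ x := le_trans (le_max_right _ _) hx
        linarith
      have hp : (0:ℝ) ≤ x ^ (n-1) := by positivity
      nlinarith
    have h3 : |F x - x ^ (n-1)| * x ≤ (x ^ (n-1) / 2) * x := by
      have : (x/2) * x ^ (n-1) / 2 * 2 = (x ^ (n-1)/2) * x / 2 * 2 := by ring
      nlinarith [h1, h2]
    exact le_of_mul_le_mul_right h3 hx0'
  have hFlow : ∀ x, x0 ≤ x → (1/2) * x ^ (n-1) ≤ F x := by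
    intro x hx
    have := hFbound x hx
    have := abs_le.1 this
    linarith [this.1]
  have hFhigh : ∀ x, x0 ≤ x → F x ≤ 2 * x ^ (n-1) := by
    intro x hx
    have := hFbound x hx
    have h := (abs_le.1 this).2
    have hx1 : 1 ≤ x := le_trans hx01 hx
    have hp : (0:ℝ) ≤ x ^ (n-1) := by positivity
    linarith
  have htends := phi_tendsto n hn F hFcont φ hφpos hφeq
  obtain ⟨C, hC0, hev⟩ := phi_bounds n hn F x0 hx01 hFlow hFhigh φ hφpos hφeq htends
  -- the derivative identity
  have hid : ∀ t, φ t ^ (n-1) * Real.exp (φ t) * deriv φ t = Real.exp (n * t) :=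
    phi_deriv_eq n hn F hF φ hφdiff hφeq
  -- exp(t/2) eventually dominates t^2
  have hexpev : ∀ᶠ t : ℝ in atTop, t ^ 2 ≤ Real.exp (t/2) := by
    have h1 : Tendsto (fun t : ℝ => Real.exp (t/2) / (t/2) ^ 2) atTop atTop :=
      (tendsto_exp_div_pow_atTop 2).comp (tendsto_id.atTop_div_const two_pos)
    have h2 : ∀ᶠ t : ℝ in atTop, (4:ℝ) ≤ Real.exp (t/2) / (t/2) ^ 2 :=
      h1.eventually_ge_atTop 4
    filter_upwards [h2, eventually_gt_atTop (0:ℝ)] with t ht ht0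
    rw [le_div_iff₀ (by positivity)] at ht
    nlinarith
  -- eventual slot for x0
  have hevx0 : ∀ᶠ t in atTop, x0 ≤ φ t := htends.eventually_ge_atTop x0
  set K : ℝ := 4 * n * AA n + 2 * ((n:ℝ)-1) * (C+3) + n * |F 0| with hK
  have main : ∀ᶠ t in atTop,
      |deriv φ t - ((n : ℝ) - ((n : ℝ) - 1) / t)| ≤ K * (Real.log t / t ^ 2) := by
    filter_upwards [hev, hexpev, hevx0, eventually_ge_atTop (3:ℝ)] with t hb hexp2 hx0t ht3
    obtain ⟨hφ1, hup, hlowb, hhalf, hlog1⟩ := hb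
    have ht0 : (0:ℝ) < t := by linarith
    have hkey := hφeq t
    have hidt := hid t
    set p : ℝ := φ t with hp
    clear_value p
    clear_value K
    have hp0 : (0:ℝ) < p := hp ▸ hφpos t
    have hppow : (0:ℝ) < p ^ (n-1) := by positivity
    have hppow1 : (1:ℝ) ≤ p ^ (n-1) := one_le_pow₀ hφ1
    have hE : (0:ℝ) < Real.exp p := Real.exp_pos _
    have hpe : (0:ℝ) < p ^ (n-1) * Real.exp p := by positivity
    have hnn : (n:ℝ) ≠ 0 := ne_of_gt hn0
    -- express deriv
    have hDe : deriv φ t * (p ^ (n-1) * Real.exp p)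
        = (n:ℝ) * F p * Real.exp p - n * F 0 := by
      calc deriv φ t * (p ^ (n-1) * Real.exp p)
          = p ^ (n-1) * Real.exp p * deriv φ t := by ring
        _ = Real.exp (n * t) := hidt
        _ = (n:ℝ) * (F p * Real.exp p) - n * F 0 := by
            rw [hkey, mul_add, mul_div_cancel₀ _ hnn]; ring
        _ = (n:ℝ) * F p * Real.exp p - n * F 0 := by ring
    set Q : ℝ := F p - p ^ (n-1) + ((n:ℝ) - 1) * p ^ (n-2) with hQ
    clear_value Q
    have hpow' : ((n:ℝ)-1) * p ^ (n-2) = ((n:ℝ)-1) * (p ^ (n-1) / p) := by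
      rcases Nat.lt_or_ge n 2 with h | h
      · have : n = 1 := by omega
        subst this
        norm_num
      · have e1 : n - 1 = (n-2) + 1 := by omega
        rw [e1, pow_succ, mul_div_assoc, div_self (ne_of_gt hp0), mul_one]
    have hFpQ : F p = Q + p ^ (n-1) - ((n:ℝ)-1) * (p ^ (n-1) / p) := by
      rw [hQ, hpow']; ring
    have hDval : deriv φ t = ((n:ℝ) * F p * Real.exp p - n * F 0) / (p ^ (n-1) * Real.exp p) :=
      (eq_div_iff hpe.ne').2 hDe
    have hdiff : deriv φ t - ((n : ℝ) - ((n : ℝ) - 1) / t)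
        = (n:ℝ) * Q / p ^ (n-1) + ((n:ℝ)-1) * (p - n*t) / (t*p)
          - (n:ℝ) * F 0 / (p ^ (n-1) * Real.exp p) := by
      rw [hDval, hFpQ]
      field_simp
      ring
    -- bound the three pieces
    have hQbound : |Q| * p ^ 2 ≤ AA n * p ^ (n-1) := by
      have h1 := F_approx2 n hn p hφ1
      rw [← hFS] at h1
      rw [← hQ] at h1
      exact h1
    have hL0 : (0:ℝ) ≤ Real.log t := by linarith
    have hn1 : (0:ℝ) ≤ (n:ℝ) - 1 := by
      have h1n : (1:ℝ) ≤ n := by exact_mod_cast hn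
      linarith
    have ht2 : t ^ 2 ≤ 4 * p ^ 2 := by nlinarith
    have hT1 : |(n:ℝ) * Q / p ^ (n-1)| * t ^ 2 ≤ 4 * n * AA n * Real.log t := by
      have e1 : |(n:ℝ) * Q / p ^ (n-1)| = (n:ℝ) * |Q| / p ^ (n-1) := by
        rw [abs_div, abs_mul, abs_of_nonneg hn0.le, abs_of_pos hppow]
      rw [e1, div_mul_eq_mul_div, div_le_iff₀ hppow]
      have hQb : |Q| * p ^ 2 ≤ AA n * p ^ (n-1) := hQbound
      have hint1 := mul_le_mul_of_nonneg_left hQb (by positivity : (0:ℝ) ≤ 4 * n)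
      have hint2 := mul_le_mul_of_nonneg_left ht2 (mul_nonneg hn0.le (abs_nonneg Q))
      have hAAL : 4 * (n:ℝ) * AA n ≤ 4 * n * AA n * Real.log t := by
        have hAApos : (0:ℝ) ≤ 4 * (n:ℝ) * AA n :=
          mul_nonneg (by positivity) (AA_nonneg n)
        nlinarith
      have step : (n:ℝ) * |Q| * t ^ 2 ≤ 4 * n * AA n * p ^ (n-1) := by nlinarith
      nlinarith [mul_le_mul_of_nonneg_right hAAL hppow.le]
    have habsd : |p - (n:ℝ)*t| ≤ (C+3) * Real.log t := by
      rw [abs_le]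
      constructor
      · have h1 : (n:ℝ)*t - p ≤ C * Real.log t := hlowb
        nlinarith
      · have h1 : p - (n:ℝ)*t ≤ 3 := by linarith
        nlinarith
    have hT2 : |((n:ℝ)-1) * (p - n*t) / (t*p)| * t ^ 2
        ≤ 2 * ((n:ℝ)-1) * (C+3) * Real.log t := by
      have e1 : |((n:ℝ)-1) * (p - n*t) / (t*p)|
          = ((n:ℝ)-1) * |p - n*t| / (t*p) := by
        rw [abs_div, abs_mul, abs_of_nonneg hn1, abs_of_pos (by positivity : (0:ℝ) < t*p)]
      rw [e1, div_mul_eq_mul_div, div_le_iff₀ (by positivity : (0:ℝ) < t*p)]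
      have hint1 := mul_le_mul_of_nonneg_left habsd
        (mul_nonneg hn1 (by positivity : (0:ℝ) ≤ t^2))
      have hCL : (0:ℝ) ≤ (C+3) * Real.log t := mul_nonneg (by linarith) hL0
      have hint2 : ((n:ℝ)-1) * ((C+3) * Real.log t) * t ^ 2
          ≤ 2 * ((n:ℝ)-1) * (C+3) * Real.log t * (t*p) := by
        have h2tp : t ^ 2 ≤ 2*(t*p) := by
          have h := mul_le_mul_of_nonneg_left (show t ≤ 2*p by linarith) ht0.le
          calc t^2 = t*t := by ring
            _ ≤ t*(2*p) := h
            _ = 2*(t*p) := by ring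
        have ha : (0:ℝ) ≤ ((n:ℝ)-1)*((C+3)*Real.log t) := mul_nonneg hn1 hCL
        calc ((n:ℝ)-1)*((C+3)*Real.log t)*t^2
            ≤ ((n:ℝ)-1)*((C+3)*Real.log t)*(2*(t*p)) := mul_le_mul_of_nonneg_left h2tp ha
          _ = 2*((n:ℝ)-1)*(C+3)*Real.log t*(t*p) := by ring
      linarith
    have hT3 : |(n:ℝ) * F 0 / (p ^ (n-1) * Real.exp p)| * t ^ 2
        ≤ (n:ℝ) * |F 0| * Real.log t := by
      have e1 : |(n:ℝ) * F 0 / (p ^ (n-1) * Real.exp p)|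
          = (n:ℝ) * |F 0| / (p ^ (n-1) * Real.exp p) := by
        rw [abs_div, abs_mul, abs_of_nonneg hn0.le, abs_of_pos hpe]
      rw [e1, div_mul_eq_mul_div, div_le_iff₀ hpe]
      have hEt : t ^ 2 ≤ p ^ (n-1) * Real.exp p := by
        have h1 : Real.exp (t/2) ≤ Real.exp p := Real.exp_le_exp.2 hhalf
        calc t ^ 2 ≤ Real.exp (t/2) := hexp2
          _ ≤ Real.exp p := h1
          _ = 1 * Real.exp p := (one_mul _).symm
          _ ≤ p ^ (n-1) * Real.exp p := mul_le_mul_of_nonneg_right hppow1 hE.le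
      have hint := mul_le_mul_of_nonneg_left hEt (mul_nonneg hn0.le (abs_nonneg (F 0)))
      have hlogmul : (n:ℝ) * |F 0| ≤ (n:ℝ) * |F 0| * Real.log t :=
        le_mul_of_one_le_right (mul_nonneg hn0.le (abs_nonneg (F 0))) hlog1
      linarith [mul_le_mul_of_nonneg_right hlogmul hpe.le]
    -- combine
    set T1 := (n:ℝ) * Q / p ^ (n-1) with hT1def
    set T2 := ((n:ℝ)-1) * (p - n*t) / (t*p) with hT2def
    set T3 := (n:ℝ) * F 0 / (p ^ (n-1) * Real.exp p) with hT3def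
    clear_value T1 T2 T3
    have hsum : |deriv φ t - ((n : ℝ) - ((n : ℝ) - 1) / t)| ≤ |T1| + |T2| + |T3| := by
      rw [hdiff, sub_eq_add_neg]
      calc |T1 + T2 + -T3| ≤ |T1 + T2| + |-T3| := abs_add_le _ _
        _ ≤ |T1| + |T2| + |T3| := by rw [abs_neg]; linarith [abs_add_le T1 T2]
    have ht2pos : (0:ℝ) < t ^ 2 := by positivity
    have hgoal : K * (Real.log t / t ^ 2) = K * Real.log t / t ^ 2 := by ring
    rw [hgoal, le_div_iff₀ ht2pos, hK]
    have hmul := mul_le_mul_of_nonneg_right hsum ht2pos.le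
    linarith [hT1, hT2, hT3, hmul]
  constructor
  · rw [isBigO_iff]
    refine ⟨K, ?_⟩
    filter_upwards [main, eventually_ge_atTop (3:ℝ)] with t ht ht3
    have hL0 : (0:ℝ) ≤ Real.log t := Real.log_nonneg (by linarith)
    rw [Real.norm_eq_abs, Real.norm_eq_abs, abs_of_nonneg (by positivity : (0:ℝ) ≤ Real.log t / t^2)]
    exact ht
  · have h0 : Tendsto (fun t : ℝ => Real.log t / t ^ 2) atTop (nhds 0) := by
      have h1 : Tendsto (fun t : ℝ => Real.log t / t) atTop (nhds 0) :=
        Real.isLittleO_log_id_atTop.tendsto_div_nhds_zero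
      have h2 : Tendsto (fun t : ℝ => (Real.log t / t) * (1/t)) atTop (nhds 0) := by
        have := h1.mul tendsto_inv_atTop_zero
        simpa using this
      apply h2.congr'
      filter_upwards [eventually_gt_atTop (0:ℝ)] with t ht
      rw [pow_two]
      field_simp
    have hbig : (fun t => deriv φ t - ((n : ℝ) - ((n : ℝ) - 1) / t)) =O[atTop]
        (fun t => Real.log t / t ^ 2) := by
      rw [isBigO_iff]
      refine ⟨K, ?_⟩
      filter_upwards [main, eventually_ge_atTop (3:ℝ)] with t ht ht3
      have hL0 : (0:ℝ) ≤ Real.log t := Real.log_nonneg (by linarith)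
      rw [Real.norm_eq_abs, Real.norm_eq_abs, abs_of_nonneg (by positivity : (0:ℝ) ≤ Real.log t / t^2)]
      exact ht
    have h1 : Tendsto (fun t => deriv φ t - ((n : ℝ) - ((n : ℝ) - 1) / t)) atTop (nhds 0) :=
      hbig.trans_tendsto h0
    have h2 : Tendsto (fun t : ℝ => (n : ℝ) - ((n : ℝ) - 1) / t) atTop (nhds (n : ℝ)) := by
      have h3 : Tendsto (fun t : ℝ => ((n : ℝ) - 1) / t) atTop (nhds 0) :=
        tendsto_const_nhds.div_atTop tendsto_id
      have h4 := Tendsto.sub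
        (tendsto_const_nhds : Tendsto (fun _ : ℝ => (n:ℝ)) atTop (nhds (n:ℝ))) h3
      simpa using h4
    have := h1.add h2
    simp only [sub_add_cancel, zero_add] at this
    exact this
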